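/- (Summed residual bound (61+).) Under the stated setup, let α* ∈ ℝⁿ and ω* ∈ ℝ^p satisfy Z·α* = 0 and Φ(a) + ⟨ω*, Z·a⟩ ≥ Φ(α*) for all a ∈ ℝⁿ. Then for every natural number T ≥ 2d+1: Σ_{t=0}^{T} ½‖α(t) − α(t+1)‖²_{C⁻¹ − H − ZᵀBZ} + Σ_{t=0}^{T} ½‖ω((t−d)⁺) − ω(t+1)‖²_{S⁻¹} ≤ ½‖α* − α(0)‖²_{C⁻¹} + ½(1+d)‖ω* − ω(0)‖²_{S⁻¹} + Γ/2. -/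

import Mathlib

open Matrix Finset

/-- The quadratic form `‖x‖²_A = xᵀ A x`. -/
noncomputable def qf {k : ℕ} (A : Matrix (Fin k) (Fin k) ℝ) (x : Fin k → ℝ) : ℝ :=
  x ⬝ᵥ (A *ᵥ x)

section AuxLemmas

lemma my_qf_nonneg {k : ℕ} {A : Matrix (Fin k) (Fin k) ℝ} (h : A.PosSemidef) (x : Fin k → ℝ) :
    0 ≤ qf A x := by simpa [qf] using h.dotProduct_mulVec_nonneg x

lemma my_qf_zero {k : ℕ} (A : Matrix (Fin k) (Fin k) ℝ) : qf A (0 : Fin k → ℝ) = 0 := by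
  simp [qf]

lemma my_qf_neg {k : ℕ} (A : Matrix (Fin k) (Fin k) ℝ) (x : Fin k → ℝ) : qf A (-x) = qf A x := by
  simp [qf, mulVec_neg]

lemma my_qf_sub_matrix {k : ℕ} (A B : Matrix (Fin k) (Fin k) ℝ) (x : Fin k → ℝ) :
    qf (A - B) x = qf A x - qf B x := by simp [qf, sub_mulVec, dotProduct_sub]

lemma my_qf_smul {k : ℕ} (c : ℝ) (A : Matrix (Fin k) (Fin k) ℝ) (x : Fin k → ℝ) :
    qf (c • A) x = c * qf A x := by simp [qf, smul_mulVec, dotProduct_smul]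

lemma my_psd_symm {k : ℕ} {A : Matrix (Fin k) (Fin k) ℝ} (hA : A.PosSemidef) : Aᵀ = A := by
  have := hA.1
  rwa [Matrix.IsHermitian, conjTranspose_eq_transpose_of_trivial] at this

lemma my_dot_symm {k : ℕ} {A : Matrix (Fin k) (Fin k) ℝ} (hA : Aᵀ = A) (x y : Fin k → ℝ) :
    x ⬝ᵥ (A *ᵥ y) = y ⬝ᵥ (A *ᵥ x) := by
  rw [dotProduct_mulVec, ← mulVec_transpose, hA, dotProduct_comm]

lemma my_mulVec_dot {a b : ℕ} (Z : Matrix (Fin a) (Fin b) ℝ) (u : Fin b → ℝ) (w : Fin a → ℝ) :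
    (Z *ᵥ u) ⬝ᵥ w = u ⬝ᵥ (Zᵀ *ᵥ w) := by
  rw [dotProduct_comm, dotProduct_mulVec, ← mulVec_transpose, dotProduct_comm]

lemma my_dotT {a b : ℕ} (Z : Matrix (Fin a) (Fin b) ℝ) (u : Fin a → ℝ) (w : Fin b → ℝ) :
    (Zᵀ *ᵥ u) ⬝ᵥ w = u ⬝ᵥ (Z *ᵥ w) := by
  rw [my_mulVec_dot, transpose_transpose]

lemma my_dot_sub_sub {k : ℕ} {A : Matrix (Fin k) (Fin k) ℝ} (hA : Aᵀ = A)
    (a b c e : Fin k → ℝ) :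
    (a - b) ⬝ᵥ (A *ᵥ (c - e)) =
      1/2 * qf A (a - e) + 1/2 * qf A (b - c) - 1/2 * qf A (a - c) - 1/2 * qf A (b - e) := by
  simp only [qf, mulVec_sub, dotProduct_sub, sub_dotProduct]
  linear_combination (1/2) * my_dot_symm hA a c - (1/2) * my_dot_symm hA a e
    - (1/2) * my_dot_symm hA b c + (1/2) * my_dot_symm hA b e

lemma my_qf_sub_expand {k : ℕ} {A : Matrix (Fin k) (Fin k) ℝ} (hA : Aᵀ = A) (x y : Fin k → ℝ) :
    qf A (x - y) = qf A x - 2 * (x ⬝ᵥ (A *ᵥ y)) + qf A y := by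
  simp only [qf, mulVec_sub, dotProduct_sub, sub_dotProduct]
  linear_combination - my_dot_symm hA y x

lemma my_dot_expand {k : ℕ} {A : Matrix (Fin k) (Fin k) ℝ} (hA : Aᵀ = A) (u v : Fin k → ℝ) :
    u ⬝ᵥ (A *ᵥ v) = 1/2 * qf A u + 1/2 * qf A v - 1/2 * qf A (u - v) := by
  have := my_qf_sub_expand hA u v
  linarith

lemma my_qf_add_smul {k : ℕ} {A : Matrix (Fin k) (Fin k) ℝ} (hA : Aᵀ = A)
    (x e : Fin k → ℝ) (θ : ℝ) :
    qf A (x + θ • e) = qf A x + 2*θ*(x ⬝ᵥ (A *ᵥ e)) + θ^2 * qf A e := by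
  simp only [qf, mulVec_add, mulVec_smul, dotProduct_add, add_dotProduct, dotProduct_smul,
    smul_dotProduct, smul_eq_mul]
  linear_combination θ * my_dot_symm hA e x

lemma my_sum_dotProduct {k : ℕ} (I : Finset ℕ) (v : ℕ → Fin k → ℝ) (w : Fin k → ℝ) :
    (∑ i ∈ I, v i) ⬝ᵥ w = ∑ i ∈ I, v i ⬝ᵥ w := by
  simp only [dotProduct, Finset.sum_apply, Finset.sum_mul]
  exact Finset.sum_comm

lemma my_dotProduct_sum {k : ℕ} (I : Finset ℕ) (w : Fin k → ℝ) (v : ℕ → Fin k → ℝ) :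
    w ⬝ᵥ (∑ i ∈ I, v i) = ∑ i ∈ I, w ⬝ᵥ v i := by
  simp only [dotProduct, Finset.sum_apply, Finset.mul_sum]
  exact Finset.sum_comm

lemma my_qf_sum_le {k : ℕ} {A : Matrix (Fin k) (Fin k) ℝ} (hA : A.PosSemidef)
    (I : Finset ℕ) (v : ℕ → Fin k → ℝ) :
    qf A (∑ i ∈ I, v i) ≤ (I.card : ℝ) * ∑ i ∈ I, qf A (v i) := by
  have hAsymm : Aᵀ = A := my_psd_symm hA
  have hmv : A *ᵥ (∑ i ∈ I, v i) = ∑ i ∈ I, A *ᵥ v i := by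
    have := map_sum (Matrix.mulVecLin A) v I
    simpa only [Matrix.mulVecLin_apply] using this
  have expand : qf A (∑ i ∈ I, v i) = ∑ i ∈ I, ∑ j ∈ I, (v i) ⬝ᵥ (A *ᵥ v j) := by
    rw [qf, hmv, my_sum_dotProduct]
    exact Finset.sum_congr rfl fun i _ => by rw [my_dotProduct_sum]
  rw [expand]
  have hbd : ∀ i ∈ I, ∀ j ∈ I, (v i) ⬝ᵥ (A *ᵥ v j) ≤ 1/2 * qf A (v i) + 1/2 * qf A (v j) := by
    intro i _ j _
    have h0 := my_qf_nonneg hA (v i - v j)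
    rw [my_qf_sub_expand hAsymm] at h0
    linarith
  calc ∑ i ∈ I, ∑ j ∈ I, (v i) ⬝ᵥ (A *ᵥ v j)
      ≤ ∑ i ∈ I, ∑ j ∈ I, (1/2 * qf A (v i) + 1/2 * qf A (v j)) := by
        refine Finset.sum_le_sum fun i hi => Finset.sum_le_sum fun j hj => hbd i hi j hj
    _ = (I.card : ℝ) * ∑ i ∈ I, qf A (v i) := by
        simp only [Finset.sum_add_distrib, Finset.sum_const, nsmul_eq_mul, Finset.mul_sum]
        rw [← Finset.sum_add_distrib]
        exact Finset.sum_congr rfl fun i _ => by ring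

lemma my_sum_delay_le (f : ℕ → ℝ) (hf : ∀ s, 0 ≤ f s) (d N : ℕ) :
    ∑ t ∈ Finset.range N, f (t - d) ≤ ((d : ℝ) + 1) * f 0 + ∑ t ∈ Finset.range N, f (t + 1) := by
  have hsum2 : 0 ≤ ∑ t ∈ Finset.range N, f (t + 1) :=
    Finset.sum_nonneg fun t _ => hf _
  rcases le_or_gt N (d + 1) with hN | hN
  · have heq : ∀ t ∈ Finset.range N, f (t - d) = f 0 := by
      intro t ht
      have ht' := Finset.mem_range.1 ht
      have : t - d = 0 := by omega
      rw [this]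
    rw [Finset.sum_congr rfl heq, Finset.sum_const, nsmul_eq_mul, Finset.card_range]
    have : (N : ℝ) ≤ (d : ℝ) + 1 := by exact_mod_cast hN
    nlinarith [hf 0]
  · rw [← Finset.sum_range_add_sum_Ico (fun t => f (t - d)) (show d + 1 ≤ N by omega)]
    have h1 : ∑ t ∈ Finset.range (d + 1), f (t - d) = ((d : ℝ) + 1) * f 0 := by
      have heq : ∀ t ∈ Finset.range (d + 1), f (t - d) = f 0 := by
        intro t ht
        have ht' := Finset.mem_range.1 ht
        have : t - d = 0 := by omega
        rw [this]
      rw [Finset.sum_congr rfl heq, Finset.sum_const, nsmul_eq_mul, Finset.card_range]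
      push_cast; ring
    have h2 : ∑ t ∈ Finset.Ico (d + 1) N, f (t - d) ≤ ∑ t ∈ Finset.range N, f (t + 1) := by
      rw [Finset.sum_Ico_eq_sum_range]
      have heq : ∀ i ∈ Finset.range (N - (d + 1)), f (d + 1 + i - d) = f (i + 1) := by
        intro i _
        congr 1
        omega
      rw [Finset.sum_congr rfl heq]
      exact Finset.sum_le_sum_of_subset_of_nonneg
        (Finset.range_subset_range.2 (by omega)) (fun t _ _ => hf _)
    linarith

lemma my_sum_advance_le (f : ℕ → ℝ) (hf : ∀ s, 0 ≤ f s) (K : ℝ) (hK : ∀ s, f s ≤ K)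
    (d N : ℕ) (hN : d + 1 ≤ N) :
    ∑ t ∈ Finset.range N, f (t + 1) ≤ ((d : ℝ) + 1) * K + ∑ t ∈ Finset.range N, f (t - d) := by
  rw [← Finset.sum_range_add_sum_Ico (fun t => f (t + 1)) (show N - (d+1) ≤ N by omega)]
  have h1 : ∑ t ∈ Finset.Ico (N - (d + 1)) N, f (t + 1) ≤ ((d : ℝ) + 1) * K := by
    calc ∑ t ∈ Finset.Ico (N - (d + 1)) N, f (t + 1)
        ≤ ∑ _t ∈ Finset.Ico (N - (d + 1)) N, K := Finset.sum_le_sum fun t _ => hK _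
      _ = ((d : ℝ) + 1) * K := by
          rw [Finset.sum_const, nsmul_eq_mul, Nat.card_Ico]
          have : N - (N - (d + 1)) = d + 1 := by omega
          rw [this]; push_cast; ring
  have h2 : ∑ t ∈ Finset.range (N - (d + 1)), f (t + 1) ≤ ∑ t ∈ Finset.range N, f (t - d) := by
    have hrw : ∑ t ∈ Finset.range (N - (d + 1)), f (t + 1)
        = ∑ t ∈ Finset.Ico (d + 1) N, f (t - d) := by
      rw [Finset.sum_Ico_eq_sum_range]
      refine Finset.sum_congr rfl fun i _ => ?_
      congr 1
      omega
    rw [hrw]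
    refine Finset.sum_le_sum_of_subset_of_nonneg ?_ (fun t _ _ => hf _)
    intro t ht
    simp only [Finset.mem_Ico, Finset.mem_range] at *
    omega
  linarith

lemma my_sum_cross_le {k : ℕ} {A : Matrix (Fin k) (Fin k) ℝ} (hA : A.PosSemidef)
    (x : ℕ → Fin k → ℝ) (d N : ℕ) :
    ∑ t ∈ Finset.range N, qf A (x (t - d) - x (t + 1))
      ≤ ((d : ℝ) + 1) ^ 2 * ∑ t ∈ Finset.range N, qf A (x t - x (t + 1)) := by
  set a : ℕ → ℝ := fun s => qf A (x s - x (s + 1)) with ha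
  have hann : ∀ s, 0 ≤ a s := fun s => my_qf_nonneg hA _
  have hpt : ∀ t, qf A (x (t - d) - x (t + 1))
      ≤ ((d : ℝ) + 1) * ∑ s ∈ Finset.Ico (t - d) (t + 1), a s := by
    intro t
    have htel : x (t - d) - x (t + 1) = ∑ s ∈ Finset.Ico (t - d) (t + 1), (x s - x (s + 1)) := by
      rw [Finset.sum_Ico_eq_sub _ (by omega : t - d ≤ t + 1)]
      rw [Finset.sum_range_sub' (fun i => x i), Finset.sum_range_sub' (fun i => x i)]
      abel
    rw [htel]
    calc qf A (∑ s ∈ Finset.Ico (t - d) (t + 1), (x s - x (s + 1)))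
        ≤ ((Finset.Ico (t - d) (t + 1)).card : ℝ) * ∑ s ∈ Finset.Ico (t - d) (t + 1), a s :=
          my_qf_sum_le hA _ _
      _ ≤ ((d : ℝ) + 1) * ∑ s ∈ Finset.Ico (t - d) (t + 1), a s := by
          have hcard : ((Finset.Ico (t - d) (t + 1)).card : ℝ) ≤ (d : ℝ) + 1 := by
            rw [Nat.card_Ico]
            exact_mod_cast (by omega : t + 1 - (t - d) ≤ d + 1)
          exact mul_le_mul_of_nonneg_right hcard (Finset.sum_nonneg fun s _ => hann s)
  have hdc : ∑ t ∈ Finset.range N, ∑ s ∈ Finset.Ico (t - d) (t + 1), a s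
      ≤ ((d : ℝ) + 1) * ∑ s ∈ Finset.range N, a s := by
    have hstep : ∀ t ∈ Finset.range N, ∑ s ∈ Finset.Ico (t - d) (t + 1), a s
        = ∑ s ∈ Finset.range N, if s ∈ Finset.Ico (t - d) (t + 1) then a s else 0 := by
      intro t ht
      rw [Finset.sum_ite_mem, Finset.inter_eq_right.2]
      intro s hs
      simp only [Finset.mem_Ico, Finset.mem_range] at *
      omega
    rw [Finset.sum_congr rfl hstep, Finset.sum_comm]
    have hinner : ∀ s ∈ Finset.range N,
        (∑ t ∈ Finset.range N, if s ∈ Finset.Ico (t - d) (t + 1) then a s else 0)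
          ≤ ((d : ℝ) + 1) * a s := by
      intro s _
      calc (∑ t ∈ Finset.range N, if s ∈ Finset.Ico (t - d) (t + 1) then a s else 0)
          ≤ ∑ t ∈ Finset.range N, if t ∈ Finset.Icc s (s + d) then a s else 0 := by
            refine Finset.sum_le_sum fun t _ => ?_
            by_cases h1 : s ∈ Finset.Ico (t - d) (t + 1)
            · have h2 : t ∈ Finset.Icc s (s + d) := by
                simp only [Finset.mem_Ico, Finset.mem_Icc] at *
                omega
              simp [h1, h2]
            · simp only [if_neg h1]
              split_ifs
              · exact hann s
              · exact le_refl 0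
        _ = ((Finset.range N ∩ Finset.Icc s (s + d)).card : ℝ) * a s := by
            rw [Finset.sum_ite_mem, Finset.sum_const, nsmul_eq_mul]
        _ ≤ ((d : ℝ) + 1) * a s := by
            refine mul_le_mul_of_nonneg_right ?_ (hann s)
            have : (Finset.range N ∩ Finset.Icc s (s + d)).card ≤ d + 1 := by
              calc (Finset.range N ∩ Finset.Icc s (s + d)).card
                  ≤ (Finset.Icc s (s + d)).card := Finset.card_le_card Finset.inter_subset_right
                _ = d + 1 := by rw [Nat.card_Icc]; omega
            exact_mod_cast this
    calc ∑ s ∈ Finset.range N,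
          (∑ t ∈ Finset.range N, if s ∈ Finset.Ico (t - d) (t + 1) then a s else 0)
        ≤ ∑ s ∈ Finset.range N, ((d : ℝ) + 1) * a s := Finset.sum_le_sum hinner
      _ = ((d : ℝ) + 1) * ∑ s ∈ Finset.range N, a s := by rw [Finset.mul_sum]
  calc ∑ t ∈ Finset.range N, qf A (x (t - d) - x (t + 1))
      ≤ ∑ t ∈ Finset.range N, ((d : ℝ) + 1) * ∑ s ∈ Finset.Ico (t - d) (t + 1), a s :=
        Finset.sum_le_sum fun t _ => hpt t
    _ = ((d : ℝ) + 1) * ∑ t ∈ Finset.range N, ∑ s ∈ Finset.Ico (t - d) (t + 1), a s := by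
        rw [Finset.mul_sum]
    _ ≤ ((d : ℝ) + 1) * (((d : ℝ) + 1) * ∑ s ∈ Finset.range N, a s) :=
        mul_le_mul_of_nonneg_left hdc (by positivity)
    _ = ((d : ℝ) + 1) ^ 2 * ∑ t ∈ Finset.range N, qf A (x t - x (t + 1)) := by
        simp only [ha]
        ring

end AuxLemmas

set_option maxHeartbeats 1000000 in
/-- summed residual bound (61+) of the Asyn-DDPG algorithm. -/
theorem asyn_ddpg_summed_residual_bound
    (n p : ℕ) (Z : Matrix (Fin p) (Fin n) ℝ)
    (C Hm : Matrix (Fin n) (Fin n) ℝ) (S : Matrix (Fin p) (Fin p) ℝ)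
    (hC : C.PosDef) (hHm : Hm.PosDef) (hS : S.PosDef)
    (d : ℕ) (hd : 1 ≤ d)
    (Hs Hr : (Fin n → ℝ) → ℝ) (gs : (Fin n → ℝ) → (Fin n → ℝ))
    (hconv_s : ∀ a b : Fin n → ℝ, Hs a + gs a ⬝ᵥ (b - a) ≤ Hs b)
    (hsmooth : ∀ a b : Fin n → ℝ, Hs b ≤ Hs a + gs a ⬝ᵥ (b - a) + 1 / 2 * qf Hm (b - a))
    (hr : ConvexOn ℝ Set.univ Hr)
    (α : ℕ → Fin n → ℝ) (ω : ℕ → Fin p → ℝ)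
    (hα : ∀ t : ℕ, ∀ v : Fin n → ℝ,
      Hr (α (t + 1)) + 1 / 2 * qf C⁻¹ (α (t + 1) -
          (α t - C *ᵥ (gs (α t) + Zᵀ *ᵥ ω (t - d) + (Zᵀ * S * Z) *ᵥ α (t - d))))
        ≤ Hr v + 1 / 2 * qf C⁻¹ (v -
          (α t - C *ᵥ (gs (α t) + Zᵀ *ᵥ ω (t - d) + (Zᵀ * S * Z) *ᵥ α (t - d)))))
    (hω : ∀ t : ℕ, ω (t + 1) = ω (t - d) + (S * Z) *ᵥ α (t + 1))
    (hstep1 : (C⁻¹ - Hm - Zᵀ * (((1 + d : ℝ)) ^ 2 • S) * Z).PosSemidef)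
    (hstep2 : (C⁻¹ - Zᵀ * S * Z).PosDef)
    (κ : ℝ) (hκ : 0 ≤ κ) (hbound : ∀ t : ℕ, qf (Zᵀ * S * Z) (α t) ≤ κ ^ 2)
    (αs : Fin n → ℝ) (hαs : Z *ᵥ αs = 0) (ωs : Fin p → ℝ)
    (hsaddle : ∀ a : Fin n → ℝ, Hs αs + Hr αs ≤ (Hs a + Hr a) + ωs ⬝ᵥ (Z *ᵥ a))
    (T : ℕ) (hT : 2 * d + 1 ≤ T) :
    (∑ t ∈ Finset.range (T + 1),
        1 / 2 * qf (C⁻¹ - Hm - Zᵀ * (((1 + d : ℝ)) ^ 2 • S) * Z) (α t - α (t + 1)))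
      + (∑ t ∈ Finset.range (T + 1), 1 / 2 * qf S⁻¹ (ω (t - d) - ω (t + 1)))
      ≤ 1 / 2 * qf C⁻¹ (αs - α 0) + 1 / 2 * (1 + d : ℝ) * qf S⁻¹ (ωs - ω 0)
        + 4 * (d : ℝ) * κ ^ 2 / 2 := by
  -- basic matrix facts
  have hCinv : (C⁻¹).PosDef := hC.inv
  have hSinv : (S⁻¹).PosDef := hS.inv
  have hCisymm : (C⁻¹)ᵀ = C⁻¹ := my_psd_symm hCinv.posSemidef
  have hSisymm : (S⁻¹)ᵀ = S⁻¹ := my_psd_symm hSinv.posSemidef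
  have hCsymm : Cᵀ = C := my_psd_symm hC.posSemidef
  have hSsymm : Sᵀ = S := my_psd_symm hS.posSemidef
  have hHmsymm : Hmᵀ = Hm := my_psd_symm hHm.posSemidef
  have hCC : C * C⁻¹ = 1 := mul_nonsing_inv C hC.det_pos.ne'.isUnit
  have hCC' : C⁻¹ * C = 1 := nonsing_inv_mul C hC.det_pos.ne'.isUnit
  have hSS : S⁻¹ * S = 1 := nonsing_inv_mul S hS.det_pos.ne'.isUnit
  have hMpsd : (Zᵀ * S * Z).PosSemidef := by
    have := hS.posSemidef.conjTranspose_mul_mul_same Z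
    rwa [conjTranspose_eq_transpose_of_trivial] at this
  have hMsymm : (Zᵀ * S * Z)ᵀ = Zᵀ * S * Z := my_psd_symm hMpsd
  -- first-order optimality of the proximal step
  have opt : ∀ (t : ℕ) (v : Fin n → ℝ),
      Hr (α (t + 1)) ≤ Hr v +
        (α (t + 1) - (α t - C *ᵥ (gs (α t) + Zᵀ *ᵥ ω (t - d) + (Zᵀ * S * Z) *ᵥ α (t - d))))
          ⬝ᵥ (C⁻¹ *ᵥ (v - α (t + 1))) := by
    intro t v
    set u : Fin n → ℝ :=
      α t - C *ᵥ (gs (α t) + Zᵀ *ᵥ ω (t - d) + (Zᵀ * S * Z) *ᵥ α (t - d)) with hu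
    set x' : Fin n → ℝ := α (t + 1) with hx'
    set e : Fin n → ℝ := v - x' with he
    set Q : ℝ := qf C⁻¹ e with hQdef
    have hQ0 : 0 ≤ Q := my_qf_nonneg hCinv.posSemidef e
    by_contra hcon
    push_neg at hcon
    set L : ℝ := Hr x' - Hr v - (x' - u) ⬝ᵥ (C⁻¹ *ᵥ e) with hL
    have hLpos : 0 < L := by simp only [hL]; linarith
    set θ : ℝ := min 1 (L / (Q + 1)) with hθ
    have hθpos : 0 < θ := lt_min one_pos (div_pos hLpos (by linarith))
    have hθ1 : θ ≤ 1 := min_le_left _ _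
    have hθ2 : θ * (Q + 1) ≤ L := by
      have : θ ≤ L / (Q + 1) := min_le_right _ _
      calc θ * (Q + 1) ≤ (L / (Q + 1)) * (Q + 1) :=
            mul_le_mul_of_nonneg_right this (by linarith)
        _ = L := by field_simp
    have hmain := hα t (x' + θ • e)
    have hconv : Hr (x' + θ • e) ≤ (1 - θ) * Hr x' + θ * Hr v := by
      have hmem : ∀ y : Fin n → ℝ, y ∈ (Set.univ : Set (Fin n → ℝ)) := fun y => Set.mem_univ y
      have := hr.2 (hmem x') (hmem v) (by linarith : (0:ℝ) ≤ 1 - θ) hθpos.le (by ring)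
      have harg : (1 - θ) • x' + θ • v = x' + θ • e := by
        simp only [he, smul_sub, sub_smul, one_smul]
        abel
      rwa [harg] at this
    have hexp : qf C⁻¹ (x' + θ • e - u) =
        qf C⁻¹ (x' - u) + 2*θ*((x' - u) ⬝ᵥ (C⁻¹ *ᵥ e)) + θ^2 * Q := by
      have harg : x' + θ • e - u = (x' - u) + θ • e := by abel
      rw [harg, my_qf_add_smul hCisymm]
    rw [hexp] at hmain
    -- hmain : Hr x' + ½ qf (x'-u) ≤ Hr (x'+θe) + ½ (qf (x'-u) + 2θ dot + θ² Q)
    have hcone : L ≤ θ / 2 * Q := by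
      have h6 : θ * L ≤ θ * (θ / 2 * Q) := by
        simp only [hL]
        nlinarith [hmain, hconv]
      exact le_of_mul_le_mul_left h6 hθpos |>.trans (le_refl _)
    clear_value θ L Q x' e u
    linarith [hcone, hθ2, hLpos, hθpos]
  -- Per-step descent inequality
  have key : ∀ t : ℕ,
      (1/2 * qf C⁻¹ (α (t+1) - αs) - 1/2 * qf C⁻¹ (α t - αs))
      + 1/2 * qf (C⁻¹ - Hm) (α t - α (t+1))
      + 1/2 * qf S⁻¹ (ω (t - d) - ω (t+1))
      + (1/2 * qf S⁻¹ (ωs - ω (t+1)) - 1/2 * qf S⁻¹ (ωs - ω (t - d)))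
      + (1/2 * qf (Zᵀ * S * Z) (α (t - d)) - 1/2 * qf (Zᵀ * S * Z) (α (t+1)))
      - 1/2 * qf (Zᵀ * S * Z) (α (t - d) - α (t+1)) ≤ 0 := by
    intro t
    have h1 := opt t αs
    have h2 := hconv_s (α t) αs
    have h3 := hsmooth (α t) (α (t+1))
    have h4 := hsaddle (α (t+1))
    have hZs : Z *ᵥ (αs - α (t+1)) = -(Z *ᵥ α (t+1)) := by
      rw [mulVec_sub, hαs, zero_sub]
    have E1 : (α (t+1) - (α t - C *ᵥ (gs (α t) + Zᵀ *ᵥ ω (t-d) + (Zᵀ * S * Z) *ᵥ α (t-d))))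
          ⬝ᵥ (C⁻¹ *ᵥ (αs - α (t+1)))
        = (α (t+1) - α t) ⬝ᵥ (C⁻¹ *ᵥ (αs - α (t+1)))
          + gs (α t) ⬝ᵥ (αs - α (t+1))
          - ω (t-d) ⬝ᵥ (Z *ᵥ α (t+1))
          - (S *ᵥ (Z *ᵥ α (t-d))) ⬝ᵥ (Z *ᵥ α (t+1)) := by
      have e0 : α (t+1) - (α t - C *ᵥ (gs (α t) + Zᵀ *ᵥ ω (t-d) + (Zᵀ * S * Z) *ᵥ α (t-d)))
          = (α (t+1) - α t) + C *ᵥ (gs (α t) + Zᵀ *ᵥ ω (t-d) + (Zᵀ * S * Z) *ᵥ α (t-d)) := by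
        abel
      rw [e0, add_dotProduct]
      have eC : (C *ᵥ (gs (α t) + Zᵀ *ᵥ ω (t-d) + (Zᵀ * S * Z) *ᵥ α (t-d)))
            ⬝ᵥ (C⁻¹ *ᵥ (αs - α (t+1)))
          = (gs (α t) + Zᵀ *ᵥ ω (t-d) + (Zᵀ * S * Z) *ᵥ α (t-d)) ⬝ᵥ (αs - α (t+1)) := by
        rw [my_mulVec_dot, hCsymm, mulVec_mulVec, hCC, one_mulVec]
      rw [eC, add_dotProduct, add_dotProduct]
      rw [my_dotT Z (ω (t-d)) (αs - α (t+1)), hZs, dotProduct_neg]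
      have eM : ((Zᵀ * S * Z) *ᵥ α (t-d)) ⬝ᵥ (αs - α (t+1))
          = -((S *ᵥ (Z *ᵥ α (t-d))) ⬝ᵥ (Z *ᵥ α (t+1))) := by
        rw [← mulVec_mulVec, ← mulVec_mulVec]
        rw [my_dotT Z _ (αs - α (t+1)), hZs, dotProduct_neg]
      rw [eM]
      ring
    rw [E1] at h1
    have hg : gs (α t) ⬝ᵥ (αs - α t)
        = gs (α t) ⬝ᵥ (αs - α (t+1)) + gs (α t) ⬝ᵥ (α (t+1) - α t) := by
      simp only [dotProduct_sub]; ring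
    have hE : 0 ≤ (α (t+1) - α t) ⬝ᵥ (C⁻¹ *ᵥ (αs - α (t+1)))
        + 1/2 * qf Hm (α (t+1) - α t)
        + (ωs ⬝ᵥ (Z *ᵥ α (t+1)) - ω (t-d) ⬝ᵥ (Z *ᵥ α (t+1)))
        - (S *ᵥ (Z *ᵥ α (t-d))) ⬝ᵥ (Z *ᵥ α (t+1)) := by linarith
    -- dual rewrites
    have hwd : ω (t+1) - ω (t-d) = S *ᵥ (Z *ᵥ α (t+1)) := by
      rw [hω t, add_sub_cancel_left]
      exact (mulVec_mulVec _ S Z).symm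
    have hZx : Z *ᵥ α (t+1) = S⁻¹ *ᵥ (ω (t+1) - ω (t-d)) := by
      rw [hwd, mulVec_mulVec, hSS, one_mulVec]
    have hQeq : qf S⁻¹ (ω (t+1) - ω (t-d)) = qf (Zᵀ * S * Z) (α (t+1)) := by
      show (ω (t+1) - ω (t-d)) ⬝ᵥ (S⁻¹ *ᵥ (ω (t+1) - ω (t-d)))
          = α (t+1) ⬝ᵥ ((Zᵀ * S * Z) *ᵥ α (t+1))
      rw [← hZx, hwd, ← mulVec_mulVec, ← mulVec_mulVec,
        dotProduct_comm (α (t+1)), my_dotT Z]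
    have hdual : ωs ⬝ᵥ (Z *ᵥ α (t+1)) - ω (t-d) ⬝ᵥ (Z *ᵥ α (t+1))
        = (ωs - ω (t+1)) ⬝ᵥ (S⁻¹ *ᵥ (ω (t+1) - ω (t-d))) + qf S⁻¹ (ω (t+1) - ω (t-d)) := by
      conv_lhs => rw [hZx]
      have hq : qf S⁻¹ (ω (t+1) - ω (t-d))
          = (ω (t+1) - ω (t-d)) ⬝ᵥ (S⁻¹ *ᵥ (ω (t+1) - ω (t-d))) := rfl
      rw [hq]
      simp only [sub_dotProduct]
      ring
    have T1 := my_dot_sub_sub hCisymm (α (t+1)) (α t) αs (α (t+1))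
    have T2 := my_dot_sub_sub hSisymm ωs (ω (t+1)) (ω (t+1)) (ω (t-d))
    have hM : (S *ᵥ (Z *ᵥ α (t-d))) ⬝ᵥ (Z *ᵥ α (t+1))
        = α (t-d) ⬝ᵥ ((Zᵀ * S * Z) *ᵥ α (t+1)) := by
      rw [my_mulVec_dot S, hSsymm, my_mulVec_dot Z, mulVec_mulVec, mulVec_mulVec]
    have T3 := my_dot_expand hMsymm (α (t-d)) (α (t+1))
    -- zero and symmetry facts
    have z1 : qf C⁻¹ (α (t+1) - α (t+1)) = 0 := by rw [sub_self]; exact my_qf_zero _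
    have z2 : qf S⁻¹ (ω (t+1) - ω (t+1)) = 0 := by rw [sub_self]; exact my_qf_zero _
    have s1 : qf C⁻¹ (α (t+1) - α t) = qf C⁻¹ (α t - α (t+1)) := by
      rw [show α (t+1) - α t = -(α t - α (t+1)) by abel, my_qf_neg]
    have s2 : qf Hm (α (t+1) - α t) = qf Hm (α t - α (t+1)) := by
      rw [show α (t+1) - α t = -(α t - α (t+1)) by abel, my_qf_neg]
    have s3 : qf S⁻¹ (ω (t-d) - ω (t+1)) = qf S⁻¹ (ω (t+1) - ω (t-d)) := by
      rw [show ω (t-d) - ω (t+1) = -(ω (t+1) - ω (t-d)) by abel, my_qf_neg]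
    have hqsub := my_qf_sub_matrix C⁻¹ Hm (α t - α (t+1))
    linarith [hE, T1, T2, T3, hdual, hM, hQeq, z1, z2, s1, s2, s3, hqsub]
  -- Summation
  have hsum : (∑ t ∈ Finset.range (T+1),
      ((1/2 * qf C⁻¹ (α (t+1) - αs) - 1/2 * qf C⁻¹ (α t - αs))
      + 1/2 * qf (C⁻¹ - Hm) (α t - α (t+1))
      + 1/2 * qf S⁻¹ (ω (t - d) - ω (t+1))
      + (1/2 * qf S⁻¹ (ωs - ω (t+1)) - 1/2 * qf S⁻¹ (ωs - ω (t - d)))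
      + (1/2 * qf (Zᵀ * S * Z) (α (t - d)) - 1/2 * qf (Zᵀ * S * Z) (α (t+1)))
      - 1/2 * qf (Zᵀ * S * Z) (α (t - d) - α (t+1)))) ≤ 0 :=
    Finset.sum_nonpos fun t _ => key t
  -- split the summed inequality into pieces
  have hsplit : (∑ t ∈ Finset.range (T+1), (1/2 * qf C⁻¹ (α (t+1) - αs) - 1/2 * qf C⁻¹ (α t - αs)))
      + (∑ t ∈ Finset.range (T+1), 1/2 * qf (C⁻¹ - Hm) (α t - α (t+1)))
      + (∑ t ∈ Finset.range (T+1), 1/2 * qf S⁻¹ (ω (t - d) - ω (t+1)))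
      + (∑ t ∈ Finset.range (T+1),
          (1/2 * qf S⁻¹ (ωs - ω (t+1)) - 1/2 * qf S⁻¹ (ωs - ω (t - d))))
      + (∑ t ∈ Finset.range (T+1),
          (1/2 * qf (Zᵀ * S * Z) (α (t - d)) - 1/2 * qf (Zᵀ * S * Z) (α (t+1))))
      - (∑ t ∈ Finset.range (T+1), 1/2 * qf (Zᵀ * S * Z) (α (t - d) - α (t+1))) ≤ 0 := by
    rw [← Finset.sum_add_distrib, ← Finset.sum_add_distrib, ← Finset.sum_add_distrib,
      ← Finset.sum_add_distrib, ← Finset.sum_sub_distrib]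
    exact hsum
  have hS1 : (∑ t ∈ Finset.range (T+1),
        (1/2 * qf C⁻¹ (α (t+1) - αs) - 1/2 * qf C⁻¹ (α t - αs)))
      = 1/2 * qf C⁻¹ (α (T+1) - αs) - 1/2 * qf C⁻¹ (α 0 - αs) :=
    Finset.sum_range_sub (fun s => 1/2 * qf C⁻¹ (α s - αs)) (T+1)
  have hS1b : 0 ≤ qf C⁻¹ (α (T+1) - αs) := my_qf_nonneg hCinv.posSemidef _
  have hS1c : qf C⁻¹ (α 0 - αs) = qf C⁻¹ (αs - α 0) := by
    rw [show α 0 - αs = -(αs - α 0) by abel, my_qf_neg]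
  have hS4 : ∑ t ∈ Finset.range (T+1), (1/2 * qf S⁻¹ (ωs - ω (t - d)))
      ≤ ((d:ℝ)+1) * (1/2 * qf S⁻¹ (ωs - ω 0))
        + ∑ t ∈ Finset.range (T+1), (1/2 * qf S⁻¹ (ωs - ω (t+1))) :=
    my_sum_delay_le (fun s => 1/2 * qf S⁻¹ (ωs - ω s))
      (fun s => by have := my_qf_nonneg hSinv.posSemidef (ωs - ω s); linarith) d (T+1)
  have hS4' : ∑ t ∈ Finset.range (T+1),
        (1/2 * qf S⁻¹ (ωs - ω (t+1)) - 1/2 * qf S⁻¹ (ωs - ω (t - d)))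
      ≥ -(((d:ℝ)+1) * (1/2 * qf S⁻¹ (ωs - ω 0))) := by
    rw [Finset.sum_sub_distrib]
    linarith
  have hS5 : ∑ t ∈ Finset.range (T+1), (1/2 * qf (Zᵀ * S * Z) (α (t+1)))
      ≤ ((d:ℝ)+1) * (κ^2/2)
        + ∑ t ∈ Finset.range (T+1), (1/2 * qf (Zᵀ * S * Z) (α (t - d))) :=
    my_sum_advance_le (fun s => 1/2 * qf (Zᵀ * S * Z) (α s))
      (fun s => by have := my_qf_nonneg hMpsd (α s); linarith)
      (κ^2/2) (fun s => by have := hbound s; linarith) d (T+1) (by omega)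
  have hS5' : ∑ t ∈ Finset.range (T+1),
        (1/2 * qf (Zᵀ * S * Z) (α (t - d)) - 1/2 * qf (Zᵀ * S * Z) (α (t+1)))
      ≥ -(((d:ℝ)+1) * (κ^2/2)) := by
    rw [Finset.sum_sub_distrib]
    linarith
  have hcross := my_sum_cross_le hMpsd α d (T+1)
  have e1 : ∑ t ∈ Finset.range (T+1), (1/2 * qf (Zᵀ * S * Z) (α (t - d) - α (t+1)))
      = 1/2 * ∑ t ∈ Finset.range (T+1), qf (Zᵀ * S * Z) (α (t - d) - α (t+1)) :=
    (Finset.mul_sum _ _ _).symm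
  have e2 : ∑ t ∈ Finset.range (T+1), (1/2 * qf (Zᵀ * S * Z) (α t - α (t+1)))
      = 1/2 * ∑ t ∈ Finset.range (T+1), qf (Zᵀ * S * Z) (α t - α (t+1)) :=
    (Finset.mul_sum _ _ _).symm
  have hS6 : (∑ t ∈ Finset.range (T+1), 1/2 * qf (Zᵀ * S * Z) (α (t - d) - α (t+1)))
      ≤ ((d:ℝ)+1)^2 * ∑ t ∈ Finset.range (T+1), 1/2 * qf (Zᵀ * S * Z) (α t - α (t+1)) := by
    rw [e1, e2, show ((d:ℝ)+1)^2 * (1/2 * ∑ t ∈ Finset.range (T+1),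
      qf (Zᵀ * S * Z) (α t - α (t+1)))
      = 1/2 * (((d:ℝ)+1)^2 * ∑ t ∈ Finset.range (T+1), qf (Zᵀ * S * Z) (α t - α (t+1))) by ring]
    linarith [hcross]
  have hTgt : (∑ t ∈ Finset.range (T+1),
        1 / 2 * qf (C⁻¹ - Hm - Zᵀ * (((1 + d : ℝ)) ^ 2 • S) * Z) (α t - α (t + 1)))
      = (∑ t ∈ Finset.range (T+1), 1/2 * qf (C⁻¹ - Hm) (α t - α (t+1)))
        - ((1 + (d:ℝ))^2) * (∑ t ∈ Finset.range (T+1),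
            1/2 * qf (Zᵀ * S * Z) (α t - α (t+1))) := by
    rw [Finset.mul_sum, ← Finset.sum_sub_distrib]
    refine Finset.sum_congr rfl fun t _ => ?_
    have hB : Zᵀ * (((1 + d : ℝ)) ^ 2 • S) * Z = ((1 + (d:ℝ)) ^ 2) • (Zᵀ * S * Z) := by
      rw [Matrix.mul_smul, Matrix.smul_mul]
    rw [sub_sub, show Hm + Zᵀ * (((1 + d : ℝ)) ^ 2 • S) * Z
        = Hm + ((1 + (d:ℝ)) ^ 2) • (Zᵀ * S * Z) by rw [hB], ← sub_sub]
    rw [my_qf_sub_matrix, my_qf_sub_matrix, my_qf_smul]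
    ring
  rw [hTgt]
  have hκd : ((d:ℝ)+1) * (κ^2/2) ≤ 4 * (d:ℝ) * κ^2 / 2 := by
    have hd' : (1:ℝ) ≤ (d:ℝ) := by exact_mod_cast hd
    nlinarith [sq_nonneg κ]
  linarith [hsplit, hS1, hS1b, hS1c, hS4', hS5', hS6, hκd]
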